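/- Every self-similar flow has infinitely many complex dimensions with positive real part: the set {ω ∈ ℂ : Σ_{j=1}^N e^{−w_j ω} = 1 and Re ω > 0} is infinite. -/

import Mathlib

open Complex Metric Filter Finset Set Topology

/-- Minimum modulus principle: if an entire function is small at the center of a disk and
bounded below on the boundary circle, it has a zero inside the closed disk. -/
lemma exists_zero_of_norm_center_lt {g : ℂ → ℂ} (hg : Differentiable ℂ g) {z₀ : ℂ} {r c : ℝ}
    (hr : 0 < r) (hcenter : ‖g z₀‖ < c)
    (hbd : ∀ z ∈ Metric.sphere z₀ r, c ≤ ‖g z‖) :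
    ∃ z ∈ Metric.closedBall z₀ r, g z = 0 := by
  by_contra h
  push_neg at h
  have hc : 0 < c := lt_of_le_of_lt (norm_nonneg _) hcenter
  have hne : ∀ z ∈ Metric.closedBall z₀ r, g z ≠ 0 := h
  have hdc : DiffContOnCl ℂ (fun z => (g z)⁻¹) (Metric.ball z₀ r) := by
    refine ⟨(hg.differentiableOn).inv fun z hz => hne z (ball_subset_closedBall hz), ?_⟩
    rw [closure_ball z₀ hr.ne']
    exact (hg.continuous.continuousOn).inv₀ hne
  have hb : ∀ z ∈ frontier (Metric.ball z₀ r), ‖(g z)⁻¹‖ ≤ c⁻¹ := by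
    intro z hz
    rw [frontier_ball z₀ hr.ne'] at hz
    rw [norm_inv]
    exact (inv_le_inv₀ (lt_of_lt_of_le hc (hbd z hz)) hc).mpr (hbd z hz)
  have hz₀ : z₀ ∈ closure (Metric.ball z₀ r) := by
    rw [closure_ball z₀ hr.ne']; exact mem_closedBall_self hr.le
  have key := Complex.norm_le_of_forall_mem_frontier_norm_le isBounded_ball hdc hb hz₀
  rw [norm_inv] at key
  have h0 : g z₀ ≠ 0 := hne z₀ (mem_closedBall_self hr.le)
  have hgz : 0 < ‖g z₀‖ := norm_pos_iff.2 h0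
  have : c ≤ ‖g z₀‖ := (inv_le_inv₀ hgz hc).mp key
  exact absurd hcenter (not_lt.2 this)

/-- Pigeonhole/Bolzano–Weierstrass recurrence: for any `ε > 0` and any `M`, there is a real
`t ≥ M` such that all the unit complex numbers `exp(-w j * t * I)` are within `ε` of `1`. -/
lemma exists_recurrence {N : ℕ} (w : Fin N → ℝ) {ε : ℝ} (hε : 0 < ε) (M : ℕ) :
    ∃ t : ℝ, (M : ℝ) ≤ t ∧
      ∀ j, ‖Complex.exp (-(w j : ℂ) * ((t : ℂ) * Complex.I)) - 1‖ < ε := by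
  set T : ℝ := (M : ℝ) + 1 with hT
  have hT1 : 1 ≤ T := by
    have : (0 : ℝ) ≤ (M : ℝ) := Nat.cast_nonneg M
    simp only [hT]; linarith
  set u : ℕ → Fin N → ℂ :=
    fun n j => Complex.exp ((-(w j) * ((n : ℝ) * T) : ℝ) * Complex.I) with hu
  have hnorm : ∀ n j, ‖u n j‖ = 1 := by
    intro n j
    rw [hu, Complex.norm_exp_ofReal_mul_I]
  have humem : ∀ n, u n ∈ Metric.closedBall (0 : Fin N → ℂ) 1 := by
    intro n
    rw [mem_closedBall, dist_zero_right]
    exact (pi_norm_le_iff_of_nonneg zero_le_one).mpr fun j => (hnorm n j).le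
  obtain ⟨a, -, φ, hφ, hconv⟩ := tendsto_subseq_of_bounded isBounded_closedBall humem
  rw [Metric.tendsto_atTop] at hconv
  obtain ⟨K, hK⟩ := hconv (ε / 2) (half_pos hε)
  have hmn : φ K < φ (K + 1) := hφ (Nat.lt_succ_self K)
  set m := φ K with hm
  set n := φ (K + 1) with hn
  set k := n - m with hk
  have hk1 : 1 ≤ k := by omega
  have hkcast : (k : ℝ) = (n : ℝ) - (m : ℝ) := by
    rw [hk, Nat.cast_sub hmn.le]
  refine ⟨(k : ℝ) * T, ?_, ?_⟩
  · have h1k : (1 : ℝ) ≤ (k : ℝ) := by exact_mod_cast hk1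
    calc (M : ℝ) ≤ T := by simp only [hT]; linarith
      _ = 1 * T := (one_mul T).symm
      _ ≤ (k : ℝ) * T := mul_le_mul_of_nonneg_right h1k (by linarith)
  · intro j
    have harg : -(w j) * ((m : ℝ) * T) + -(w j) * ((k : ℝ) * T) = -(w j) * ((n : ℝ) * T) := by
      rw [hkcast]; ring
    have hkeyj : u n j - u m j =
        Complex.exp ((-(w j) * ((m : ℝ) * T) : ℝ) * Complex.I) *
          (Complex.exp ((-(w j) * ((k : ℝ) * T) : ℝ) * Complex.I) - 1) := by
      rw [mul_sub, mul_one, ← Complex.exp_add, ← add_mul, ← Complex.ofReal_add, harg]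
    have hdmn : ‖u n - u m‖ < ε := by
      have d1 := hK (K + 1) (Nat.le_succ K)
      have d2 := hK K le_rfl
      calc ‖u n - u m‖ = dist (u n) (u m) := (dist_eq_norm _ _).symm
        _ ≤ dist (u n) a + dist a (u m) := dist_triangle _ _ _
        _ = dist ((u ∘ φ) (K + 1)) a + dist ((u ∘ φ) K) a := by
            rw [dist_comm a]; rfl
        _ < ε / 2 + ε / 2 := add_lt_add d1 d2
        _ = ε := add_halves ε
    have h1 : ‖u n j - u m j‖ < ε :=
      lt_of_le_of_lt (norm_le_pi_norm (u n - u m) j) hdmn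
    rw [hkeyj, norm_mul, Complex.norm_exp_ofReal_mul_I, one_mul] at h1
    have heq : -(w j : ℂ) * ((((k : ℝ) * T : ℝ) : ℂ) * Complex.I)
        = ((-(w j) * ((k : ℝ) * T) : ℝ) : ℂ) * Complex.I := by
      push_cast; ring
    rw [heq]
    exact h1

/-- Every self-similar flow has infinitely many complex dimensions with positive
real part. -/
theorem infinitely_many_complex_dimensions (N : ℕ) (hN : 2 ≤ N) (w : Fin N → ℝ)
    (hw : ∀ j, 0 < w j) (hmono : Monotone w) :
    {ω : ℂ | ∑ j, Complex.exp (-(w j : ℂ) * ω) = 1 ∧ 0 < ω.re}.Infinite := by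
  set f : ℂ → ℂ := fun s => (∑ j, Complex.exp (-(w j : ℂ) * s)) - 1 with hfdef
  have hdiff : Differentiable ℂ f := by
    apply Differentiable.sub _ (differentiable_const _)
    exact Differentiable.fun_sum fun j _ =>
      ((differentiable_const _).mul (differentiable_id (𝕜 := ℂ))).cexp
  set g : ℝ → ℝ := fun x => ∑ j, Real.exp (-(w j) * x) with hgdef
  have hfr : ∀ x : ℝ, f (x : ℂ) = (g x : ℂ) - 1 := by
    intro x
    have hterm : ∀ j : Fin N, Complex.exp (-(w j : ℂ) * (x : ℂ))
        = ((Real.exp (-(w j) * x) : ℝ) : ℂ) := by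
      intro j
      rw [Complex.ofReal_exp]
      congr 1
      push_cast
      ring
    simp only [hfdef, hgdef]
    rw [Finset.sum_congr rfl fun j _ => hterm j]
    push_cast
    ring
  have hgcont : Continuous g :=
    continuous_finset_sum _ fun j _ => Real.continuous_exp.comp (continuous_const.mul continuous_id)
  -- find X > 0 with g X < 1
  have htend : Tendsto g atTop (𝓝 0) := by
    have h : Tendsto (fun x : ℝ => ∑ j : Fin N, Real.exp (-(w j) * x)) atTop
        (𝓝 (∑ _j : Fin N, (0 : ℝ))) := by
      refine tendsto_finset_sum _ fun j _ => ?_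
      have h1 : Tendsto (fun x : ℝ => w j * x) atTop atTop :=
        Tendsto.const_mul_atTop (hw j) tendsto_id
      have h2 : Tendsto (fun x : ℝ => -(w j) * x) atTop atBot := by
        simp only [neg_mul]
        exact tendsto_neg_atTop_atBot.comp h1
      exact Real.tendsto_exp_atBot.comp h2
    simpa [hgdef] using h
  have hev : ∀ᶠ x : ℝ in atTop, g x < 1 ∧ 0 < x :=
    (htend.eventually (gt_mem_nhds one_pos)).and (eventually_gt_atTop 0)
  obtain ⟨X, hgX, hX0⟩ := hev.exists
  -- IVT to get D with g D = 1
  have hg0 : g 0 = N := by simp [hgdef]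
  have h1mem : (1 : ℝ) ∈ Set.Icc (g X) (g 0) := by
    constructor
    · exact hgX.le
    · rw [hg0]
      have : (1 : ℕ) ≤ N := le_trans one_le_two hN
      exact_mod_cast this
  obtain ⟨D, hDmem, hgD⟩ := intermediate_value_Icc' hX0.le hgcont.continuousOn h1mem
  have hD0 : 0 < D := by
    rcases lt_or_eq_of_le hDmem.1 with h | h
    · exact h
    · exfalso
      rw [← h] at hgD
      rw [hg0] at hgD
      have : (2 : ℝ) ≤ (N : ℝ) := by exact_mod_cast hN
      linarith
  have hfD : f (D : ℂ) = 0 := by rw [hfr, hgD]; simp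
  have hfX : f (X : ℂ) ≠ 0 := by
    rw [hfr]
    intro h
    rw [sub_eq_zero] at h
    have : g X = 1 := by exact_mod_cast h
    linarith
  -- isolated zero
  have hevne : ∀ᶠ z in 𝓝[≠] (D : ℂ), f z ≠ 0 := by
    rcases (hdiff.analyticAt (D : ℂ)).eventually_eq_zero_or_eventually_ne_zero with h | h
    · exfalso
      have han : AnalyticOnNhd ℂ f Set.univ := fun z _ => hdiff.analyticAt z
      have hz : f =ᶠ[𝓝 (D : ℂ)] 0 := by
        filter_upwards [h] with z hz; simpa using hz
      have := han.eqOn_zero_of_preconnected_of_eventuallyEq_zero isPreconnected_univ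
        (Set.mem_univ (D : ℂ)) hz
      exact hfX (this (Set.mem_univ _))
    · exact h
  rw [eventually_nhdsWithin_iff] at hevne
  rw [Metric.eventually_nhds_iff] at hevne
  obtain ⟨r₁, hr₁, hr₁ne⟩ := hevne
  set r : ℝ := min (r₁ / 2) (D / 2) with hrdef
  have hr : 0 < r := lt_min (half_pos hr₁) (half_pos hD0)
  have hrr₁ : r < r₁ := lt_of_le_of_lt (min_le_left _ _) (half_lt_self hr₁)
  have hrD : r ≤ D / 2 := min_le_right _ _
  -- min of ‖f‖ on the sphere
  have hsne : (Metric.sphere (D : ℂ) r).Nonempty := NormedSpace.sphere_nonempty.mpr hr.le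
  obtain ⟨z₁, hz₁s, hz₁min⟩ := (isCompact_sphere (D : ℂ) r).exists_isMinOn hsne
    ((continuous_norm.comp hdiff.continuous).continuousOn)
  set c : ℝ := ‖f z₁‖ with hcdef
  have hz₁D : z₁ ≠ (D : ℂ) := by
    intro h
    have := Metric.mem_sphere.mp hz₁s
    rw [h] at this
    simp at this
    exact hr.ne' this.symm
  have hz₁ne : f z₁ ≠ 0 := by
    refine hr₁ne ?_ ?_
    · rw [Metric.mem_sphere.mp hz₁s]; exact hrr₁
    · simpa using hz₁D
  have hc : 0 < c := norm_pos_iff.2 hz₁ne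
  have hsmin : ∀ z ∈ Metric.sphere (D : ℂ) r, c ≤ ‖f z‖ := fun z hz => hz₁min hz
  -- choose ε
  set ε : ℝ := c / (2 * (N + 1)) with hεdef
  have hεpos : 0 < ε := by
    apply div_pos hc; positivity
  have hNε : (N : ℝ) * ε < c / 2 := by
    rw [hεdef, ← mul_div_assoc, div_lt_div_iff₀ (by positivity) (by norm_num)]
    have hN0 : (0 : ℝ) ≤ (N : ℝ) := Nat.cast_nonneg N
    nlinarith
  -- suppose the set is finite
  by_contra hfin
  rw [Set.not_infinite] at hfin
  have hbdd : BddAbove (Complex.im '' {ω : ℂ | ∑ j, Complex.exp (-(w j : ℂ) * ω) = 1 ∧ 0 < ω.re}) :=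
    (hfin.image _).bddAbove
  obtain ⟨B, hB⟩ := hbdd
  set M : ℕ := ⌈B + r⌉₊ + 1 with hMdef
  obtain ⟨t, htM, hterm⟩ := exists_recurrence w hεpos M
  -- the shifted function
  set ft : ℂ → ℂ := fun z => f (z + (t : ℂ) * Complex.I) with hftdef
  have hftdiff : Differentiable ℂ ft :=
    hdiff.comp (differentiable_id.add_const _)
  have hkey : ∀ z : ℂ, ft z - f z =
      ∑ j, Complex.exp (-(w j : ℂ) * z) *
        (Complex.exp (-(w j : ℂ) * ((t : ℂ) * Complex.I)) - 1) := by
    intro z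
    simp only [hftdef, hfdef]
    rw [sub_sub_sub_cancel_right, ← Finset.sum_sub_distrib]
    refine Finset.sum_congr rfl fun j _ => ?_
    have h1 : -(w j : ℂ) * (z + (t : ℂ) * Complex.I)
        = -(w j : ℂ) * z + -(w j : ℂ) * ((t : ℂ) * Complex.I) := by ring
    rw [h1, Complex.exp_add]
    ring
  have hpert : ∀ z ∈ Metric.closedBall (D : ℂ) r, ‖ft z - f z‖ ≤ (N : ℝ) * ε := by
    intro z hz
    have hre : 0 ≤ z.re := by
      rw [mem_closedBall, dist_eq_norm] at hz
      have h1 := Complex.abs_re_le_norm (z - (D : ℂ))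
      rw [Complex.sub_re, Complex.ofReal_re] at h1
      have h2 : |z.re - D| ≤ r := le_trans h1 hz
      have h3 := (abs_le.mp h2).1
      linarith
    rw [hkey]
    calc ‖∑ j, Complex.exp (-(w j : ℂ) * z) *
          (Complex.exp (-(w j : ℂ) * ((t : ℂ) * Complex.I)) - 1)‖
        ≤ ∑ j, ‖Complex.exp (-(w j : ℂ) * z) *
          (Complex.exp (-(w j : ℂ) * ((t : ℂ) * Complex.I)) - 1)‖ := norm_sum_le _ _
      _ ≤ ∑ _j : Fin N, ε := by
          refine Finset.sum_le_sum fun j _ => ?_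
          rw [norm_mul]
          have he1 : ‖Complex.exp (-(w j : ℂ) * z)‖ ≤ 1 := by
            rw [Complex.norm_exp]
            apply Real.exp_le_one_iff.mpr
            have hre2 : (-(w j : ℂ) * z).re = -(w j) * z.re := by
              simp [Complex.mul_re]
            rw [hre2]
            have := (hw j).le
            nlinarith
          calc ‖Complex.exp (-(w j : ℂ) * z)‖ *
                ‖Complex.exp (-(w j : ℂ) * ((t : ℂ) * Complex.I)) - 1‖
              ≤ 1 * ‖Complex.exp (-(w j : ℂ) * ((t : ℂ) * Complex.I)) - 1‖ :=
                mul_le_mul_of_nonneg_right he1 (norm_nonneg _)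
            _ = ‖Complex.exp (-(w j : ℂ) * ((t : ℂ) * Complex.I)) - 1‖ := one_mul _
            _ ≤ ε := (hterm j).le
      _ = (N : ℝ) * ε := by
          rw [Finset.sum_const, Finset.card_univ, Fintype.card_fin, nsmul_eq_mul]
  -- apply the minimum modulus lemma
  have hcenter : ‖ft (D : ℂ)‖ < c / 2 := by
    have h1 : ‖ft (D : ℂ) - f (D : ℂ)‖ ≤ (N : ℝ) * ε :=
      hpert _ (mem_closedBall_self hr.le)
    rw [hfD, sub_zero] at h1
    exact lt_of_le_of_lt h1 hNε
  have hbdry : ∀ z ∈ Metric.sphere (D : ℂ) r, c / 2 ≤ ‖ft z‖ := by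
    intro z hz
    have h1 : ‖ft z - f z‖ ≤ (N : ℝ) * ε := hpert z (sphere_subset_closedBall hz)
    have h2 : c ≤ ‖f z‖ := hsmin z hz
    have h5 := norm_sub_norm_le (f z) (ft z)
    have h6 : ‖f z - ft z‖ = ‖ft z - f z‖ := norm_sub_rev _ _
    linarith
  obtain ⟨z₂, hz₂mem, hz₂zero⟩ := exists_zero_of_norm_center_lt hftdiff hr hcenter hbdry
  -- the zero ω
  set ω : ℂ := z₂ + (t : ℂ) * Complex.I with hωdef
  have hωre : 0 < ω.re := by
    rw [mem_closedBall, dist_eq_norm] at hz₂mem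
    have h1 := Complex.abs_re_le_norm (z₂ - (D : ℂ))
    rw [Complex.sub_re, Complex.ofReal_re] at h1
    have h2 : |z₂.re - D| ≤ r := le_trans h1 hz₂mem
    have h3 := (abs_le.mp h2).1
    have h4 : ω.re = z₂.re := by
      simp [hωdef]
    rw [h4]
    linarith
  have hωmem : ω ∈ {ω : ℂ | ∑ j, Complex.exp (-(w j : ℂ) * ω) = 1 ∧ 0 < ω.re} := by
    constructor
    · have hz : f ω = 0 := hz₂zero
      rw [hfdef] at hz
      simpa [sub_eq_zero] using hz
    · exact hωre
  -- contradiction on imaginary parts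
  have hωim : B < ω.im := by
    rw [mem_closedBall, dist_eq_norm] at hz₂mem
    have him := Complex.abs_im_le_norm (z₂ - (D : ℂ))
    rw [Complex.sub_im, Complex.ofReal_im, sub_zero] at him
    have h2 : |z₂.im| ≤ r := le_trans him hz₂mem
    have h3 := (abs_le.mp h2).1
    have h4 : ω.im = z₂.im + t := by
      simp [hωdef]
    have hMB : B + r + 1 ≤ (M : ℝ) := by
      rw [hMdef]
      push_cast
      have := Nat.le_ceil (B + r)
      linarith
    rw [h4]
    linarith
  have := hB ⟨ω, hωmem, rfl⟩
  linarith
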